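/- Let W be an H-module C-algebra over a Noetherian commutative ring C, with W Noetherian, such that W has no pair of nonzero H-ideals with zero intersection (H-irreducible). If z ∈ C acts on W non-nilpotently and there is k with ann_W(z^k) = ann_W(z^{k+1}) = ⋯, then ann_W(z^k) ∩ z^k W = 0, and consequently ann_W(z^k) = 0, i.e., z is not a zero divisor on W. -/
import Mathlib


noncomputable section
open TensorProduct

/-! ## The free `H`-module algebra -/

variable (F : Type) [Field F] (H : Type) [Ring H] [Algebra F H]

/-- The free `H`-module algebra `F^H⟨X⟩` on a set of variables `V`:
the tensor algebra on `F X ⊗ H`. -/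
abbrev FreeHMA (V : Type) : Type := TensorAlgebra F ((V →₀ F) ⊗[F] H)

variable {V : Type}

/-- The variable `x_v^h`. -/
def xvar (v : V) (h : H) : FreeHMA F H V :=
  TensorAlgebra.ι F (Finsupp.single v 1 ⊗ₜ[F] h)

/-- The algebra endomorphism of the free `H`-module algebra induced by a linear
substitution of the variables (not touching the `H`-labels). -/
def substHom (g : V → (V →₀ F)) : FreeHMA F H V →ₐ[F] FreeHMA F H V :=
  TensorAlgebra.lift F ((TensorAlgebra.ι F).comp
    (LinearMap.rTensor H (Finsupp.linearCombination F g)))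

/-- `f|_{x_i ↔ x_j}` : swapping two variables. -/
def swapSubst [DecidableEq V] (i j : V) : FreeHMA F H V →ₐ[F] FreeHMA F H V :=
  substHom F H (fun v => Finsupp.single (Equiv.swap i j v) 1)

/-- `f|_{x_i → x_j}` : substituting `x_j` for `x_i`. -/
def renameSubst [DecidableEq V] (i j : V) : FreeHMA F H V →ₐ[F] FreeHMA F H V :=
  substHom F H (Function.update (fun v => Finsupp.single v 1) i (Finsupp.single j 1))

/-- `f` is alternating on the set of variables `X`. -/
def AlternatingOn [DecidableEq V] (X : Finset V) (f : FreeHMA F H V) : Prop :=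
  ∀ i ∈ X, ∀ j ∈ X, i ≠ j → swapSubst F H i j f = -f

/-- `f` involves only variables from `T`. -/
def DependsOnlyOn (f : FreeHMA F H V) (T : Set V) : Prop :=
  f ∈ Algebra.adjoin F {x : FreeHMA F H V | ∃ v ∈ T, ∃ h : H, x = xvar F H v h}

/-- `f` is a multilinear `H`-polynomial in the variables of `supp` (and involves no
other variables): substituting `α x_i + y` for `x_i` (`y` a fresh variable) gives
`α f + f|_{x_i → y}`. -/
def MultilinearOn [DecidableEq V] (supp S : Finset V) (f : FreeHMA F H V) : Prop :=
  DependsOnlyOn F H f ↑supp ∧ S ⊆ supp ∧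
  ∀ i ∈ S, ∀ y, y ∉ supp → ∀ α : F,
    substHom F H (Function.update (fun v => Finsupp.single v 1) i
        (α • Finsupp.single i 1 + Finsupp.single y 1)) f
      = α • f + renameSubst F H i y f

/-! ## `H`-module algebras -/

variable [Coalgebra F H]

/-- An `H`-module algebra structure on an `F`-algebra `A`: an `H`-action by linear maps
such that `h·(ab) = (h₍₁₎·a)(h₍₂₎·b)` and `h·1 = ε(h)1`. -/
structure HMA (A : Type) [Ring A] [Algebra F A] where
  act : H →ₗ[F] A →ₗ[F] A
  act_one : act 1 = LinearMap.id
  act_mul : ∀ h k : H, act (h * k) = (act h).comp (act k)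
  act_algebraOne : ∀ h : H, act h 1 = (Coalgebra.counit (R := F) h) • (1 : A)
  act_mul_compat :
    (TensorProduct.lift act).comp ((LinearMap.mul' F A).lTensor H)
      = (LinearMap.mul' F A).comp
          (((TensorProduct.map (TensorProduct.lift act) (TensorProduct.lift act)).comp
            (TensorProduct.tensorTensorTensorComm F H H A A).toLinearMap).comp
            ((Coalgebra.comul (R := F) (A := H)).rTensor (A ⊗[F] A)))

variable {A : Type} [Ring A] [Algebra F A]

/-- Evaluation of `H`-polynomials at an assignment `v : V → A` of the variables,
sending `x_v^h` to `h · (v v)`. -/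
def HMA.eval (M : HMA F H A) (v : V → A) : FreeHMA F H V →ₐ[F] A :=
  TensorAlgebra.lift F
    (TensorProduct.lift ((M.act.flip).comp (Finsupp.linearCombination F v)))

/-- The set of `H`-identities of `A` (in variables `V`). -/
def HMA.idSet (M : HMA F H A) (V : Type) : Set (FreeHMA F H V) :=
  {f | ∀ v : V → A, M.eval F H v f = 0}

/-- The `F`-subspace of `H`-identities of `A`. -/
def HMA.idSub (M : HMA F H A) (V : Type) : Submodule F (FreeHMA F H V) :=
  ⨅ v : V → A, LinearMap.ker (M.eval F H v).toLinearMap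

/-! ## `H`-T-ideals -/

/-- The canonical `H`-module algebra structure on the free `H`-module algebra is
characterized by `h · x_v^k = x_v^{hk}` on generators. -/
def IsFreeAction (𝔉 : HMA F H (FreeHMA F H V)) : Prop :=
  ∀ (h k : H) (p : V →₀ F),
    𝔉.act h (TensorAlgebra.ι F (p ⊗ₜ[F] k)) = TensorAlgebra.ι F (p ⊗ₜ[F] (h * k))

/-- An `H`-T-ideal: a two-sided ideal of the free `H`-module algebra stable under all
`H`-endomorphisms, i.e. under all substitutions of the variables by arbitrary
`H`-polynomials (`𝔉` is the free `H`-action). -/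
def IsHTIdeal (𝔉 : HMA F H (FreeHMA F H V)) (Γ : Set (FreeHMA F H V)) : Prop :=
  (0 : FreeHMA F H V) ∈ Γ ∧
  (∀ f g, f ∈ Γ → g ∈ Γ → f + g ∈ Γ) ∧
  (∀ f g, f ∈ Γ → g * f ∈ Γ ∧ f * g ∈ Γ) ∧
  (∀ (v : V → FreeHMA F H V) f, f ∈ Γ → 𝔉.eval F H v f ∈ Γ)

/-- The `H`-T-ideal generated by a set of `H`-polynomials. -/
def hTIdealSpan (𝔉 : HMA F H (FreeHMA F H V)) (s : Set (FreeHMA F H V)) :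
    Set (FreeHMA F H V) :=
  ⋂₀ {Γ | IsHTIdeal F H 𝔉 Γ ∧ s ⊆ Γ}

/-- `Γ` contains the `t`-th Capelli identity: every multilinear `H`-polynomial
alternating in `t` variables belongs to `Γ`. -/
def SatisfiesCapelli (Γ : Set (FreeHMA F H ℕ)) (t : ℕ) : Prop :=
  ∀ (f : FreeHMA F H ℕ) (supp X : Finset ℕ),
    MultilinearOn F H supp supp f → X ⊆ supp → X.card = t → AlternatingOn F H X f → f ∈ Γ

/-! ## The Kemer index -/

/-- There are, for every `μ`, multilinear `H`-polynomials outside `Γ` alternating on `μ`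
disjoint (small) sets of cardinality `a` and on `s` further disjoint (big) sets of
cardinality `a+1`. -/
def HasKemerAlt (Γ : Set (FreeHMA F H ℕ)) (a s : ℕ) : Prop :=
  ∀ μ : ℕ, ∃ (supp : Finset ℕ) (f : FreeHMA F H ℕ)
      (Xs : Fin μ → Finset ℕ) (Ys : Fin s → Finset ℕ),
    f ∉ Γ ∧ MultilinearOn F H supp supp f ∧
    (∀ i, Xs i ⊆ supp) ∧ (∀ j, Ys j ⊆ supp) ∧
    (∀ i, (Xs i).card = a) ∧ (∀ j, (Ys j).card = a + 1) ∧
    Pairwise (fun i i' => Disjoint (Xs i) (Xs i')) ∧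
    Pairwise (fun j j' => Disjoint (Ys j) (Ys j')) ∧
    (∀ i j, Disjoint (Xs i) (Ys j)) ∧
    (∀ i, AlternatingOn F H (Xs i) f) ∧ (∀ j, AlternatingOn F H (Ys j) f)

/-- `α(Γ)`, the first component of the Kemer index. -/
def kemerAlpha (Γ : Set (FreeHMA F H ℕ)) : ℕ :=
  sSup {a | HasKemerAlt F H Γ a 0}

/-- `s(Γ)`, the second component of the Kemer index. -/
def kemerS (Γ : Set (FreeHMA F H ℕ)) : ℕ :=
  sSup {s | HasKemerAlt F H Γ (kemerAlpha F H Γ) s}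

/-- The Kemer index `Ind(Γ) = (α(Γ), s(Γ))`. -/
def kemerIndex (Γ : Set (FreeHMA F H ℕ)) : ℕ × ℕ :=
  (kemerAlpha F H Γ, kemerS F H Γ)

/-- An `H`-Kemer polynomial of `Γ` of rank `μ`. -/
def IsKemerPoly (Γ : Set (FreeHMA F H ℕ)) (μ : ℕ) (f : FreeHMA F H ℕ) : Prop :=
  ∃ (supp : Finset ℕ) (Xs : Fin μ → Finset ℕ)
      (Ys : Fin (kemerS F H Γ) → Finset ℕ),
    f ∉ Γ ∧ MultilinearOn F H supp supp f ∧
    (∀ i, Xs i ⊆ supp) ∧ (∀ j, Ys j ⊆ supp) ∧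
    (∀ i, (Xs i).card = kemerAlpha F H Γ) ∧
    (∀ j, (Ys j).card = kemerAlpha F H Γ + 1) ∧
    Pairwise (fun i i' => Disjoint (Xs i) (Xs i')) ∧
    Pairwise (fun j j' => Disjoint (Ys j) (Ys j')) ∧
    (∀ i j, Disjoint (Xs i) (Ys j)) ∧
    (∀ i, AlternatingOn F H (Xs i) f) ∧ (∀ j, AlternatingOn F H (Ys j) f)

/-! ## Finite dimensional `H`-module algebras, radicals and parameters -/

/-- A bundled finite dimensional `H`-module algebra. -/
structure FDHMA where
  carrier : Type
  [ring : Ring carrier]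
  [alg : Algebra F carrier]
  fd : FiniteDimensional F carrier
  M : HMA F H carrier

attribute [instance] FDHMA.ring FDHMA.alg

/-- The Jacobson radical of an `F`-algebra, as an `F`-subspace. -/
def jacRad (A : Type) [Ring A] [Algebra F A] : Submodule F A :=
  ((⊥ : Ideal A).jacobson).restrictScalars F

/-- The nilpotency index `n_A` of the Jacobson radical. -/
def nilIndex (A : Type) [Ring A] : ℕ :=
  sInf {n : ℕ | ((⊥ : Ideal A).jacobson) ^ n = ⊥}

/-- `d(A)`, the dimension of the semisimple part `A/J(A)`. -/
def ssDim (A : Type) [Ring A] [Algebra F A] : ℕ :=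
  Module.finrank F (A ⧸ jacRad F A)

/-- The parameter `Par(A) = (d(A), n_A - 1)` of a finite dimensional algebra. -/
def par (A : FDHMA F H) : ℕ × ℕ :=
  (ssDim F A.carrier, nilIndex A.carrier - 1)

/-- The `H`-identities (in countably many variables) of a bundled algebra. -/
def FDHMA.ids (A : FDHMA F H) : Set (FreeHMA F H ℕ) :=
  A.M.idSet F H ℕ

/-- An `H`-basic algebra: not `H`-PI-equivalent to a finite direct product of finite
dimensional `H`-module algebras of strictly smaller parameter. -/
def IsHBasic (A : FDHMA F H) : Prop :=
  ¬ ∃ (s : ℕ) (B : Fin s → FDHMA F H),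
      (∀ i, toLex (par F H (B i)) < toLex (par F H A)) ∧
      A.ids F H = ⋂ i, (B i).ids F H

/-- The `H`-ideal of an `H`-module algebra generated by a set. -/
def hIdealSpan (M : HMA F H A) (s : Set A) : Submodule F A :=
  sInf {I : Submodule F A | s ⊆ I ∧ (∀ a : A, ∀ x ∈ I, a * x ∈ I ∧ x * a ∈ I) ∧
    (∀ h : H, ∀ x ∈ I, M.act h x ∈ I)}

/-- Let `W` be an `H`-module `C`-algebra over a commutative Noetherian
ring `C`, with `W` Noetherian, having no pair of nonzero `H`-ideals with zero
intersection (`H`-irreducible).  If `z ∈ C` acts on `W` non-nilpotently and `k` is such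
that `ann_W(z^k) = ann_W(z^{k+1}) = ⋯`, then `ann_W(z^k) ∩ z^k W = 0`, and consequently
`ann_W(z^k) = 0`, i.e. `z` is not a zero divisor on `W`. -/
theorem H_irreducible_non_nilpotent_not_zero_divisor
    (F : Type) [Field F] (H : Type) [Ring H] [HopfAlgebra F H] [FiniteDimensional F H]
    (C : Type) [CommRing C] [Algebra F C] [IsNoetherianRing C]
    (W : Type) [Ring W] [Algebra F W] [Algebra C W] [IsScalarTower F C W]
    [IsNoetherian C W]
    (MW : HMA F H W)
    (hCequiv : ∀ (h : H) (c : C) (w : W), MW.act h (c • w) = c • MW.act h w)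
    -- `W` is `H`-irreducible: no two nonzero `H`-ideals intersect trivially
    (hirr : ∀ I J : Submodule F W,
      (∀ a : W, ∀ x ∈ I, a * x ∈ I ∧ x * a ∈ I) → (∀ (h : H), ∀ x ∈ I, MW.act h x ∈ I) →
      (∀ a : W, ∀ x ∈ J, a * x ∈ J ∧ x * a ∈ J) → (∀ (h : H), ∀ x ∈ J, MW.act h x ∈ J) →
      I ⊓ J = ⊥ → I = ⊥ ∨ J = ⊥)
    (z : C)
    -- `z` acts non-nilpotently on `W`
    (hznil : ∀ m : ℕ, algebraMap C W z ^ m ≠ 0)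
    (k : ℕ)
    -- the ascending chain of annihilators stabilizes at `k`
    (hstab : ∀ m, k ≤ m → ∀ w : W,
      algebraMap C W z ^ m * w = 0 ↔ algebraMap C W z ^ k * w = 0) :
    (∀ w : W, algebraMap C W z ^ k * w = 0 →
      (∃ y : W, w = algebraMap C W z ^ k * y) → w = 0) ∧
    (∀ w : W, algebraMap C W z ^ k * w = 0 → w = 0) ∧
    (∀ w : W, algebraMap C W z * w = 0 → w = 0) := by
  set Z : W := algebraMap C W z with hZ
  have hcomm : ∀ (a : W), Z ^ k * a = a * Z ^ k := fun a => by
    rw [hZ, ← map_pow]; exact Algebra.commutes _ _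
  have hact : ∀ (h : H) (w : W), MW.act h (Z ^ k * w) = Z ^ k * MW.act h w := by
    intro h w
    rw [hZ, ← map_pow, ← Algebra.smul_def, ← Algebra.smul_def, hCequiv]
  have part1 : ∀ w : W, Z ^ k * w = 0 → (∃ y, w = Z ^ k * y) → w = 0 := by
    rintro w hw ⟨y, hy⟩
    have h2 : Z ^ (k + k) * y = 0 := by
      rw [pow_add, mul_assoc, ← hy, hw]
    have h3 := (hstab (k + k) (Nat.le_add_right _ _) y).1 h2
    rw [hy, h3]
  have part2 : ∀ w : W, Z ^ k * w = 0 → w = 0 := by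
    set I : Submodule F W := LinearMap.ker (LinearMap.mulLeft F (Z ^ k)) with hIdef
    set J : Submodule F W := LinearMap.range (LinearMap.mulLeft F (Z ^ k)) with hJdef
    have hImem : ∀ w : W, w ∈ I ↔ Z ^ k * w = 0 := fun w => by
      simp [hIdef, LinearMap.mem_ker]
    have hJmem : ∀ w : W, w ∈ J ↔ ∃ y, Z ^ k * y = w := fun w => by
      simp [hJdef, LinearMap.mem_range]
    have hcase := hirr I J
      (fun a x hx => by
        rw [hImem] at hx
        constructor
        · rw [hImem, ← mul_assoc, hcomm, mul_assoc, hx, mul_zero]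
        · rw [hImem, ← mul_assoc, hx, zero_mul])
      (fun h x hx => by
        rw [hImem] at hx
        rw [hImem, ← hact, hx, map_zero])
      (fun a x hx => by
        rw [hJmem] at hx
        obtain ⟨y, hy⟩ := hx
        constructor
        · rw [hJmem]
          exact ⟨a * y, by rw [← mul_assoc, hcomm a, mul_assoc, hy]⟩
        · rw [hJmem]
          exact ⟨y * a, by rw [← mul_assoc, hy]⟩)
      (fun h x hx => by
        rw [hJmem] at hx
        obtain ⟨y, hy⟩ := hx
        rw [hJmem]
        exact ⟨MW.act h y, by rw [← hact, hy]⟩)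
      (by
        rw [eq_bot_iff]
        intro x hx
        obtain ⟨hxI, hxJ⟩ := Submodule.mem_inf.1 hx
        rw [hImem] at hxI
        rw [hJmem] at hxJ
        obtain ⟨y, hy⟩ := hxJ
        exact Submodule.mem_bot F |>.2 (part1 x hxI ⟨y, hy.symm⟩))
    rcases hcase with hI | hJ
    · intro w hw
      have hmem : w ∈ I := (hImem w).2 hw
      rw [hI] at hmem
      exact (Submodule.mem_bot F).1 hmem
    · exfalso
      have hmem : Z ^ k ∈ J := (hJmem _).2 ⟨1, mul_one _⟩
      rw [hJ] at hmem
      exact hznil k ((Submodule.mem_bot F).1 hmem)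
  refine ⟨part1, part2, fun w hw => ?_⟩
  apply part2
  have h1 : Z ^ (k + 1) * w = 0 := by
    rw [pow_succ, mul_assoc, hw, mul_zero]
  exact (hstab (k + 1) (Nat.le_add_right _ _) w).1 h1
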